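/- arXiv:2603.26382 — 2 statements merged into one kernel-verified Lean document; each statement's English description precedes it below -/
import Mathlib

section
/- Let α ≥ 0 be a real constant. For every function f : [0,1] → ℝ that is continuously differentiable on [0,1] and not identically zero, the Rayleigh quotient (α(f(0)² + f(1)²) + ∫₀¹ (f′(z))² dz) / (∫₀¹ f(z)² dz) is at least ((−α + √(α² + 8π²α)) / (4π))². -/
open Real Set

/-- Positivity of the integral of `f²` for a continuous `f` on `[0,1]`
that is not identically zero. -/
lemma sq_integral_pos_of_ne_zero (f : ℝ → ℝ)
    (hfc : ContinuousOn f (Icc (0 : ℝ) 1))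
    (hne : ∃ z ∈ Icc (0 : ℝ) 1, f z ≠ 0) :
    0 < ∫ z in (0 : ℝ)..1, (f z) ^ 2 := by
  obtain ⟨z₀, hz₀, hz₀ne⟩ := hne
  have hIcc : uIcc (0 : ℝ) 1 = Icc (0 : ℝ) 1 := uIcc_of_le zero_le_one
  have hint : IntervalIntegrable (fun z => (f z) ^ 2) MeasureTheory.volume 0 1 := by
    apply ContinuousOn.intervalIntegrable
    rw [hIcc]; exact hfc.pow 2
  -- find a neighborhood of z₀ within Icc where f ≠ 0
  have hmem : {y : ℝ | y ≠ 0} ∈ nhds (f z₀) := isOpen_ne.mem_nhds hz₀ne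
  have hpre : f ⁻¹' {y : ℝ | y ≠ 0} ∈ nhdsWithin z₀ (Icc (0 : ℝ) 1) :=
    (hfc z₀ hz₀) hmem
  rw [Metric.mem_nhdsWithin_iff] at hpre
  obtain ⟨ε, hε, hball⟩ := hpre
  set a : ℝ := max 0 (z₀ - ε / 2) with ha
  set b : ℝ := min 1 (z₀ + ε / 2) with hb
  have hz₀0 : (0 : ℝ) ≤ z₀ := hz₀.1
  have hz₀1 : z₀ ≤ 1 := hz₀.2
  have hab : a < b := by
    rw [ha, hb, max_lt_iff, lt_min_iff, lt_min_iff]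
    constructor
    · exact ⟨zero_lt_one, by linarith⟩
    · exact ⟨by linarith, by linarith⟩
  have hsub : Ioo a b ⊆ Function.support (fun z => (f z) ^ 2) ∩ Ioc 0 1 := by
    intro z hz
    have hza : a < z := hz.1
    have hzb : z < b := hz.2
    have h0z : 0 ≤ z := le_of_lt (lt_of_le_of_lt (le_max_left _ _) hza)
    have hz1 : z ≤ 1 := le_of_lt (lt_of_lt_of_le hzb (min_le_left _ _))
    have hzball : z ∈ Metric.ball z₀ ε := by
      rw [Metric.mem_ball, Real.dist_eq, abs_lt]
      constructor
      · have : z₀ - ε / 2 ≤ a := le_max_right _ _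
        linarith
      · have : b ≤ z₀ + ε / 2 := min_le_right _ _
        linarith
    have hzIcc : z ∈ Icc (0 : ℝ) 1 := ⟨h0z, hz1⟩
    have hfz : f z ≠ 0 := hball ⟨hzball, hzIcc⟩
    constructor
    · simp only [Function.mem_support]
      exact pow_ne_zero 2 hfz
    · exact ⟨lt_of_le_of_lt (le_max_left _ _) hza, hz1⟩
  rw [intervalIntegral.integral_pos_iff_support_of_nonneg_ae'
    (Filter.Eventually.of_forall fun z => sq_nonneg (f z)) hint]
  refine ⟨zero_lt_one, ?_⟩
  calc (0 : ENNReal) < MeasureTheory.volume (Ioo a b) := by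
        rw [Real.volume_Ioo]
        exact ENNReal.ofReal_pos.mpr (by linarith)
    _ ≤ _ := MeasureTheory.measure_mono hsub

/-- Jordan-type inequality used to compare the explicit constant with the
Robin eigenvalue: `(π - 2x) sin x ≤ 4 π x cos x` on `[0, π/2]`. -/
lemma jordan_aux {x : ℝ} (hx0 : 0 ≤ x) (hx : x ≤ π / 2) :
    (π - 2 * x) * Real.sin x ≤ 4 * π * x * Real.cos x := by
  have hs : Real.sin x ≤ x := Real.sin_le hx0
  have hj : 1 - 2 / π * x ≤ Real.cos x := Real.one_sub_mul_le_cos hx0 hx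
  have hπ : 0 < π := Real.pi_pos
  have h1 : (π - 2 * x) * Real.sin x ≤ (π - 2 * x) * x :=
    mul_le_mul_of_nonneg_left hs (by linarith)
  have h2 : (π - 2 * x) * x ≤ (4 * π - 8 * x) * x := by nlinarith
  have hj' : π - 2 * x ≤ π * Real.cos x := by
    have h := mul_le_mul_of_nonneg_left hj hπ.le
    have he : π * (1 - 2 / π * x) = π - 2 * x := by field_simp
    linarith [h, he.symm.trans_le h]
  have h3 : (4 * π - 8 * x) * x ≤ 4 * π * x * Real.cos x := by
    have h4 := mul_le_mul_of_nonneg_left hj' (by positivity : (0:ℝ) ≤ 4 * x)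
    nlinarith [h4]
  linarith

lemma rho_eq_aux (μ u : ℝ) (hcz : Real.cos u ≠ 0) :
    -(μ ^ 2 / Real.cos u ^ 2) = -μ ^ 2 - (-(μ * (Real.sin u / Real.cos u))) ^ 2 := by
  have h1 := Real.sin_sq_add_cos_sq u
  field_simp
  linear_combination μ ^ 2 * h1

/-- For a real constant `α ≥ 0` and any trial function `f` on `[0,1]`
(continuously differentiable on `[0,1]`, with derivative `f'` there,
and not identically zero), the Rayleigh quotient
`(α(f(0)² + f(1)²) + ∫₀¹ f'(z)² dz) / (∫₀¹ f(z)² dz)` is bounded below by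
`((-α + √(α² + 8π²α)) / (4π))²`. -/
theorem rayleigh_quotient_lower_bound
    (α : ℝ) (hα : 0 ≤ α)
    (f f' : ℝ → ℝ)
    (hderiv : ∀ z ∈ Icc (0 : ℝ) 1, HasDerivWithinAt f (f' z) (Icc (0 : ℝ) 1) z)
    (hf' : ContinuousOn f' (Icc (0 : ℝ) 1))
    (hne : ∃ z ∈ Icc (0 : ℝ) 1, f z ≠ 0) :
    ((-α + Real.sqrt (α ^ 2 + 8 * π ^ 2 * α)) / (4 * π)) ^ 2 ≤
      (α * (f 0 ^ 2 + f 1 ^ 2) + ∫ z in (0 : ℝ)..1, (f' z) ^ 2) /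
        ∫ z in (0 : ℝ)..1, (f z) ^ 2 := by
  have hπ : 0 < π := Real.pi_pos
  have hfc : ContinuousOn f (Icc (0 : ℝ) 1) := fun z hz =>
    (hderiv z hz).continuousWithinAt
  have hIcc : uIcc (0 : ℝ) 1 = Icc (0 : ℝ) 1 := uIcc_of_le zero_le_one
  have hX : 0 < ∫ z in (0 : ℝ)..1, (f z) ^ 2 := sq_integral_pos_of_ne_zero f hfc hne
  -- Step 1: find μ ∈ [0, π) with μ sin(μ/2) = α cos(μ/2)
  have hcont : ContinuousOn (fun μ : ℝ => μ * Real.sin (μ / 2) - α * Real.cos (μ / 2))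
      (Icc 0 π) := by
    apply Continuous.continuousOn
    exact (continuous_id.mul (Real.continuous_sin.comp (continuous_id.div_const 2))).sub
      (continuous_const.mul (Real.continuous_cos.comp (continuous_id.div_const 2)))
  have hiv : (0 : ℝ) ∈ Icc ((fun μ : ℝ => μ * Real.sin (μ / 2) - α * Real.cos (μ / 2)) 0)
      ((fun μ : ℝ => μ * Real.sin (μ / 2) - α * Real.cos (μ / 2)) π) := by
    constructor
    · show (0 : ℝ) * Real.sin (0 / 2) - α * Real.cos (0 / 2) ≤ 0
      norm_num
      linarith
    · show (0 : ℝ) ≤ π * Real.sin (π / 2) - α * Real.cos (π / 2)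
      rw [Real.sin_pi_div_two, Real.cos_pi_div_two]
      norm_num
      exact hπ.le
  obtain ⟨μ, hμmem, hμeq⟩ := intermediate_value_Icc (le_of_lt hπ) hcont hiv
  have hμ0 : 0 ≤ μ := hμmem.1
  have key : μ * Real.sin (μ / 2) = α * Real.cos (μ / 2) := by
    have := hμeq
    simp only at this
    linarith [this]
  have hμπ : μ < π := by
    rcases lt_or_eq_of_le hμmem.2 with h | h
    · exact h
    · exfalso
      rw [h] at key
      rw [Real.sin_pi_div_two, Real.cos_pi_div_two] at key
      simp at key
  have hcosμ : 0 < Real.cos (μ / 2) :=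
    Real.cos_pos_of_mem_Ioo ⟨by linarith, by linarith⟩
  -- Step 2: π α ≤ 2 π μ² + α μ
  have hstep2 : π * α ≤ 2 * π * μ ^ 2 + α * μ := by
    have hj := jordan_aux (x := μ / 2) (by linarith) (by linarith)
    -- multiply target by cos(μ/2) > 0
    have h1 : π * α * Real.cos (μ / 2) ≤ (2 * π * μ ^ 2 + α * μ) * Real.cos (μ / 2) := by
      nlinarith [key, hj, mul_nonneg hμ0 (Real.sin_nonneg_of_nonneg_of_le_pi
        (by linarith) (by linarith) : 0 ≤ Real.sin (μ / 2))]
    exact le_of_mul_le_mul_right h1 hcosμ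
  -- Step 3: the explicit constant m satisfies 0 ≤ m ≤ μ
  set m : ℝ := (-α + Real.sqrt (α ^ 2 + 8 * π ^ 2 * α)) / (4 * π) with hm
  have hm0 : 0 ≤ m := by
    have h1 : α ≤ Real.sqrt (α ^ 2 + 8 * π ^ 2 * α) := by
      have := Real.sqrt_le_sqrt (show α ^ 2 ≤ α ^ 2 + 8 * π ^ 2 * α by nlinarith)
      rwa [Real.sqrt_sq hα] at this
    rw [hm]
    apply div_nonneg (by linarith) (by linarith)
  have hmμ : m ≤ μ := by
    have hsq : Real.sqrt (α ^ 2 + 8 * π ^ 2 * α) ≤ 4 * π * μ + α := by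
      have h1 : α ^ 2 + 8 * π ^ 2 * α ≤ (4 * π * μ + α) ^ 2 := by nlinarith
      have := Real.sqrt_le_sqrt h1
      rwa [Real.sqrt_sq (by nlinarith : (0 : ℝ) ≤ 4 * π * μ + α)] at this
    rw [hm, div_le_iff₀ (by linarith : (0 : ℝ) < 4 * π)]
    linarith
  -- Step 4: the variational inequality μ² ∫ f² ≤ α (f0² + f1²) + ∫ f'²
  set r : ℝ → ℝ := fun z => -(μ * (Real.sin (μ * (z - 1 / 2)) / Real.cos (μ * (z - 1 / 2))))
    with hr
  set ρ : ℝ → ℝ := fun z => -(μ ^ 2 / Real.cos (μ * (z - 1 / 2)) ^ 2) with hρ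
  have hcpos : ∀ z ∈ Icc (0 : ℝ) 1, 0 < Real.cos (μ * (z - 1 / 2)) := by
    intro z hz
    apply Real.cos_pos_of_mem_Ioo
    constructor
    · nlinarith [hz.1, hz.2]
    · nlinarith [hz.1, hz.2]
  have hrderiv : ∀ z ∈ Icc (0 : ℝ) 1, HasDerivAt r (ρ z) z := by
    intro z hz
    have hcz : Real.cos (μ * (z - 1 / 2)) ≠ 0 := ne_of_gt (hcpos z hz)
    have hu : HasDerivAt (fun z : ℝ => μ * (z - 1 / 2)) μ z := by
      simpa using ((hasDerivAt_id z).sub_const (1 / 2 : ℝ)).const_mul μ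
    have hsin : HasDerivAt (fun z : ℝ => Real.sin (μ * (z - 1 / 2)))
        (Real.cos (μ * (z - 1 / 2)) * μ) z :=
      hu.sin
    have hcos : HasDerivAt (fun z : ℝ => Real.cos (μ * (z - 1 / 2)))
        (-Real.sin (μ * (z - 1 / 2)) * μ) z :=
      hu.cos
    have hdiv := (hsin.div hcos hcz).const_mul μ
    have := hdiv.neg
    refine HasDerivAt.congr_deriv this ?_
    have h1 := Real.sin_sq_add_cos_sq (μ * (z - 1 / 2))
    have hnum : Real.cos (μ * (z - 1 / 2)) * μ * Real.cos (μ * (z - 1 / 2)) -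
        Real.sin (μ * (z - 1 / 2)) * (-Real.sin (μ * (z - 1 / 2)) * μ) = μ := by
      linear_combination μ * h1
    rw [hρ]
    simp only
    rw [hnum]
    ring
  have hrcont : ContinuousOn r (Icc (0 : ℝ) 1) := by
    apply ContinuousOn.neg
    apply ContinuousOn.mul continuousOn_const
    apply ContinuousOn.div
    · exact (Real.continuous_sin.comp (continuous_const.mul (continuous_id.sub continuous_const))).continuousOn
    · exact (Real.continuous_cos.comp (continuous_const.mul (continuous_id.sub continuous_const))).continuousOn
    · intro z hz; exact ne_of_gt (hcpos z hz)
  have hρcont : ContinuousOn ρ (Icc (0 : ℝ) 1) := by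
    apply ContinuousOn.neg
    apply ContinuousOn.div continuousOn_const
    · exact ((Real.continuous_cos.comp (continuous_const.mul (continuous_id.sub continuous_const))).pow 2).continuousOn
    · intro z hz
      exact pow_ne_zero 2 (ne_of_gt (hcpos z hz))
  have hρeq : ∀ z ∈ Icc (0 : ℝ) 1, ρ z = -μ ^ 2 - (r z) ^ 2 := by
    intro z hz
    have hcz : Real.cos (μ * (z - 1 / 2)) ≠ 0 := ne_of_gt (hcpos z hz)
    exact rho_eq_aux μ (μ * (z - 1 / 2)) hcz
  set P : ℝ → ℝ := fun z => r z * (f z) ^ 2 with hP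
  set Pd : ℝ → ℝ := fun z => ρ z * (f z) ^ 2 + r z * (2 * f z * f' z) with hPd
  have hPcont : ContinuousOn P (Icc (0 : ℝ) 1) := hrcont.mul (hfc.pow 2)
  have hPdcont : ContinuousOn Pd (Icc (0 : ℝ) 1) := by
    apply ContinuousOn.add (hρcont.mul (hfc.pow 2))
    exact hrcont.mul ((continuousOn_const.mul hfc).mul hf')
  have hPderiv : ∀ z ∈ Ioo (0 : ℝ) 1, HasDerivAt P (Pd z) z := by
    intro z hz
    have hzIcc : z ∈ Icc (0 : ℝ) 1 := Ioo_subset_Icc_self hz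
    have hfz : HasDerivAt f (f' z) z :=
      (hderiv z hzIcc).hasDerivAt (Icc_mem_nhds hz.1 hz.2)
    have hf2 : HasDerivAt (fun z => (f z) ^ 2) (2 * f z * f' z) z := by
      have := hfz.pow 2
      have h2 : HasDerivAt (f ^ 2) (2 * f z * f' z) z := by simpa using this
      exact h2
    exact (hrderiv z hzIcc).mul hf2
  have hiPd : IntervalIntegrable Pd MeasureTheory.volume 0 1 := by
    apply ContinuousOn.intervalIntegrable; rw [hIcc]; exact hPdcont
  have hif2 : IntervalIntegrable (fun z => (f z) ^ 2) MeasureTheory.volume 0 1 := by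
    apply ContinuousOn.intervalIntegrable; rw [hIcc]; exact hfc.pow 2
  have hif'2 : IntervalIntegrable (fun z => (f' z) ^ 2) MeasureTheory.volume 0 1 := by
    apply ContinuousOn.intervalIntegrable; rw [hIcc]; exact hf'.pow 2
  have hftc : ∫ z in (0 : ℝ)..1, Pd z = P 1 - P 0 := by
    apply intervalIntegral.integral_eq_sub_of_hasDeriv_right_of_le zero_le_one hPcont
    · intro x hx
      exact (hPderiv x hx).hasDerivWithinAt
    · exact hiPd
  -- boundary values
  have hr1 : r 1 = -α := by
    have h1 : μ * ((1 : ℝ) - 1 / 2) = μ / 2 := by ring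
    rw [hr]
    simp only [h1]
    rw [neg_eq_iff_eq_neg, neg_neg]
    field_simp
    linarith [key]
  have hr0 : r 0 = α := by
    have h0 : μ * ((0 : ℝ) - 1 / 2) = -(μ / 2) := by ring
    rw [hr]
    simp only [h0, Real.sin_neg, Real.cos_neg]
    field_simp
    linarith [key]
  -- pointwise identity : f'² - μ² f² - Pd = (f' - r f)²
  have hpt : ∀ z ∈ Icc (0 : ℝ) 1,
      (f' z) ^ 2 - μ ^ 2 * (f z) ^ 2 - Pd z = (f' z - r z * f z) ^ 2 := by
    intro z hz
    rw [hPd]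
    simp only
    rw [hρeq z hz]
    ring
  have hnn : 0 ≤ ∫ z in (0 : ℝ)..1, (f' z - r z * f z) ^ 2 :=
    intervalIntegral.integral_nonneg zero_le_one (fun u _ => sq_nonneg _)
  have hsplit : ∫ z in (0 : ℝ)..1, (f' z - r z * f z) ^ 2 =
      (∫ z in (0 : ℝ)..1, (f' z) ^ 2) - μ ^ 2 * (∫ z in (0 : ℝ)..1, (f z) ^ 2)
        - ∫ z in (0 : ℝ)..1, Pd z := by
    have hcongr : ∫ z in (0 : ℝ)..1, (f' z - r z * f z) ^ 2 =
        ∫ z in (0 : ℝ)..1, ((f' z) ^ 2 - μ ^ 2 * (f z) ^ 2 - Pd z) := by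
      apply intervalIntegral.integral_congr
      intro z hz
      rw [hIcc] at hz
      exact (hpt z hz).symm
    rw [hcongr]
    rw [intervalIntegral.integral_sub ((hif'2.sub (hif2.const_mul (μ ^ 2)))) hiPd,
      intervalIntegral.integral_sub hif'2 (hif2.const_mul (μ ^ 2)),
      intervalIntegral.integral_const_mul]
  have hvar : μ ^ 2 * (∫ z in (0 : ℝ)..1, (f z) ^ 2) ≤
      α * (f 0 ^ 2 + f 1 ^ 2) + ∫ z in (0 : ℝ)..1, (f' z) ^ 2 := by
    have hPval : P 1 - P 0 = -α * (f 1) ^ 2 - α * (f 0) ^ 2 := by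
      have e1 : P 1 = r 1 * (f 1) ^ 2 := rfl
      have e0 : P 0 = r 0 * (f 0) ^ 2 := rfl
      rw [e1, e0, hr1, hr0]
    rw [hsplit, hftc, hPval] at hnn
    linarith
  -- conclusion
  rw [le_div_iff₀ hX]
  calc m ^ 2 * (∫ z in (0 : ℝ)..1, (f z) ^ 2)
      ≤ μ ^ 2 * (∫ z in (0 : ℝ)..1, (f z) ^ 2) := by
        apply mul_le_mul_of_nonneg_right _ (le_of_lt hX)
        exact pow_le_pow_left₀ hm0 hmμ 2
    _ ≤ _ := hvar
end

section
/- Let α ≥ 0 be a real constant. Suppose g : [0,1] → ℝ is twice continuously differentiable, not identically zero, and satisfies −g″(z) = Λ g(z) for all z ∈ [0,1] together with the Robin boundary conditions −g′(0) + α g(0) = 0 and g′(1) + α g(1) = 0, for some real number Λ. Then Λ ≥ ((−α + √(α² + 8π²α)) / (4π))². -/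
open Real Set
open MeasureTheory

private lemma robin_tan_deriv_aux (b x : ℝ) (hc : Real.cos x ≠ 0) :
    -b^2 - (-b * Real.tan x)^2 = -b * (1 / Real.cos x ^ 2 * b) := by
  rw [Real.tan_eq_sin_div_cos]
  field_simp
  linear_combination (-b^2) * Real.sin_sq_add_cos_sq x

set_option maxHeartbeats 1000000

/-- Any eigenvalue `Λ` of the Sturm–Liouville problem `-g'' = Λ g` on `[0,1]`
with Robin boundary conditions `-g'(0) + α g(0) = 0` and `g'(1) + α g(1) = 0`
(with `g` twice continuously differentiable and not identically zero, `α ≥ 0`)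
satisfies `Λ ≥ ((-α + √(α² + 8π²α)) / (4π))²`. -/
theorem robin_eigenvalue_lower_bound
    (α : ℝ) (hα : 0 ≤ α)
    (g g' g'' : ℝ → ℝ) (Λ : ℝ)
    (hg' : ∀ z ∈ Icc (0 : ℝ) 1, HasDerivWithinAt g (g' z) (Icc (0 : ℝ) 1) z)
    (hg'' : ∀ z ∈ Icc (0 : ℝ) 1, HasDerivWithinAt g' (g'' z) (Icc (0 : ℝ) 1) z)
    (hg''cont : ContinuousOn g'' (Icc (0 : ℝ) 1))
    (hne : ∃ z ∈ Icc (0 : ℝ) 1, g z ≠ 0)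
    (hode : ∀ z ∈ Icc (0 : ℝ) 1, -(g'' z) = Λ * g z)
    (hbc0 : -(g' 0) + α * g 0 = 0)
    (hbc1 : g' 1 + α * g 1 = 0) :
    Λ ≥ ((-α + Real.sqrt (α ^ 2 + 8 * π ^ 2 * α)) / (4 * π)) ^ 2 := by
  obtain ⟨z₀, hz₀, hgz₀⟩ := hne
  have hπ := Real.pi_pos
  obtain ⟨s, hsdef⟩ : ∃ s, s = Real.sqrt (α ^ 2 + 8 * π ^ 2 * α) := ⟨_, rfl⟩
  obtain ⟨b, hbdef⟩ : ∃ b, b = (-α + s) / (4 * π) := ⟨_, rfl⟩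
  rw [← hsdef, ← hbdef]
  have hs : s ^ 2 = α ^ 2 + 8 * π ^ 2 * α := by
    rw [hsdef]; exact Real.sq_sqrt (by positivity)
  have hsge : α ≤ s := by
    have h := Real.sqrt_le_sqrt (show α ^ 2 ≤ α ^ 2 + 8 * π ^ 2 * α by nlinarith)
    rw [Real.sqrt_sq hα] at h; rw [hsdef]; exact h
  have hs0 : 0 ≤ s := hsdef ▸ Real.sqrt_nonneg _
  have hb0 : 0 ≤ b := hbdef ▸ div_nonneg (by linarith) (by positivity)
  have hbπ : b < π := by
    have h : s < α + 4 * π ^ 2 := by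
      rw [hsdef]
      have h2 := Real.sqrt_lt' (x := α ^ 2 + 8 * π ^ 2 * α) (y := α + 4 * π ^ 2) (by positivity)
      rw [h2]; nlinarith [pow_pos hπ 4]
    rw [hbdef, div_lt_iff₀ (by positivity)]
    nlinarith
  have hkey : (4 * π * b + α) ^ 2 = α ^ 2 + 8 * π ^ 2 * α := by
    have h : 4 * π * b + α = s := by rw [hbdef]; field_simp; ring
    rw [h]; exact hs
  have hquad : 2 * π * b ^ 2 + α * b = π * α := by
    have h8 : (8 * π) * (2 * π * b ^ 2 + α * b - π * α) = 0 := by linear_combination hkey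
    rcases mul_eq_zero.mp h8 with h | h
    · linarith
    · linarith
  have hb2 : b / 2 ≤ π / 2 := by linarith
  have hcos : (π - b) / π ≤ Real.cos (b / 2) := by
    have h := Real.one_sub_mul_le_cos (x := b / 2) (by linarith) hb2
    have h2 : (π - b) / π = 1 - 2 / π * (b / 2) := by field_simp
    linarith [h2 ▸ h]
  have hcospos : 0 < Real.cos (b / 2) := lt_of_lt_of_le (div_pos (by linarith) hπ) hcos
  have hsin : Real.sin (b / 2) ≤ b / 2 := Real.sin_le (by linarith)
  have htanb : b * Real.tan (b / 2) ≤ α := by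
    have h3 : α * ((π - b) / π) = 2 * b ^ 2 := by field_simp; linarith [hquad]
    have h1 : b * Real.sin (b / 2) ≤ α * Real.cos (b / 2) := by
      have h4 := mul_le_mul_of_nonneg_left hsin hb0
      have h5 := mul_le_mul_of_nonneg_left hcos hα
      nlinarith [sq_nonneg b]
    calc b * Real.tan (b / 2) = b * Real.sin (b / 2) / Real.cos (b / 2) := by
          rw [Real.tan_eq_sin_div_cos]; ring
      _ ≤ α := by rw [div_le_iff₀ hcospos]; linarith [h1]
  -- continuity and derivative facts
  have hgc : ContinuousOn g (Icc 0 1) := fun z hz => (hg' z hz).continuousWithinAt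
  have hg'c : ContinuousOn g' (Icc 0 1) := fun z hz => (hg'' z hz).continuousWithinAt
  have hgd : ∀ z ∈ Ioo (0:ℝ) 1, HasDerivAt g (g' z) z := fun z hz =>
    (hg' z (Ioo_subset_Icc_self hz)).hasDerivAt (Icc_mem_nhds hz.1 hz.2)
  have hg'd : ∀ z ∈ Ioo (0:ℝ) 1, HasDerivAt g' (g'' z) z := fun z hz =>
    (hg'' z (Ioo_subset_Icc_self hz)).hasDerivAt (Icc_mem_nhds hz.1 hz.2)
  -- the ground-state logarithmic derivative
  obtain ⟨φ, hφdef⟩ : ∃ φ : ℝ → ℝ, φ = fun t => -b * Real.tan (b * (t - 1/2)) := ⟨_, rfl⟩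
  have hcosφ : ∀ t ∈ Icc (0:ℝ) 1, 0 < Real.cos (b * (t - 1/2)) := by
    intro t ht
    apply Real.cos_pos_of_mem_Ioo
    constructor
    · simp only [mem_Icc] at ht
      nlinarith [ht.1, ht.2, mul_nonneg hb0 ht.1]
    · simp only [mem_Icc] at ht
      nlinarith [ht.1, ht.2, mul_nonneg hb0 (show (0:ℝ) ≤ 1 - t by linarith [ht.2])]
  have hφd : ∀ t ∈ Icc (0:ℝ) 1, HasDerivAt φ (-b^2 - (φ t)^2) t := by
    intro t ht
    have hc := hcosφ t ht
    have hlin : HasDerivAt (fun t : ℝ => b * (t - 1/2)) b t := by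
      simpa only [mul_one] using ((hasDerivAt_id' t).sub_const (1/2)).const_mul b
    have htan : HasDerivAt (fun y => -b * Real.tan (b * (y - 1/2))) _ t := ((Real.hasDerivAt_tan hc.ne').comp t hlin).const_mul (-b)
    rw [hφdef]
    convert htan using 1
    show -b^2 - (-b * Real.tan (b * (t - 1/2)))^2 = -b * (1 / Real.cos (b * (t - 1/2)) ^ 2 * b)
    exact robin_tan_deriv_aux b _ hc.ne'
  have hφc : ContinuousOn φ (Icc 0 1) := fun t ht => ((hφd t ht).continuousAt).continuousWithinAt
  -- integrability
  have hI1 : IntervalIntegrable (fun t => g t ^ 2) volume 0 1 := by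
    apply ContinuousOn.intervalIntegrable; rw [uIcc_of_le (by norm_num)]; exact hgc.pow 2
  have hI2 : IntervalIntegrable (fun t => g' t ^ 2) volume 0 1 := by
    apply ContinuousOn.intervalIntegrable; rw [uIcc_of_le (by norm_num)]; exact hg'c.pow 2
  have hIQi : IntervalIntegrable (fun t => (g' t - φ t * g t) ^ 2) volume 0 1 := by
    apply ContinuousOn.intervalIntegrable; rw [uIcc_of_le (by norm_num)]
    exact (hg'c.sub (hφc.mul hgc)).pow 2
  have hIF : IntervalIntegrable (fun t => (-b^2 - (φ t)^2) * g t ^ 2 + φ t * (2 * g t * g' t))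
      volume 0 1 := by
    apply ContinuousOn.intervalIntegrable; rw [uIcc_of_le (by norm_num)]
    exact ((continuousOn_const.sub (hφc.pow 2)).mul (hgc.pow 2)).add
      (hφc.mul ((continuousOn_const.mul hgc).mul hg'c))
  -- FTC: integration by parts identity
  have hint1 : ∫ t in (0:ℝ)..1, (g' t * g' t + g t * g'' t) = g 1 * g' 1 - g 0 * g' 0 := by
    apply intervalIntegral.integral_eq_sub_of_hasDeriv_right_of_le (by norm_num)
      (hgc.mul hg'c) (fun t ht => ((hgd t ht).mul (hg'd t ht)).hasDerivWithinAt)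
    apply ContinuousOn.intervalIntegrable; rw [uIcc_of_le (by norm_num)]
    exact (hg'c.mul hg'c).add (hgc.mul hg''cont)
  -- FTC: derivative of φ * g^2
  have hint2 : ∫ t in (0:ℝ)..1, ((-b^2 - (φ t)^2) * g t ^ 2 + φ t * (2 * g t * g' t))
      = φ 1 * g 1 ^ 2 - φ 0 * g 0 ^ 2 := by
    apply intervalIntegral.integral_eq_sub_of_hasDeriv_right_of_le (by norm_num)
      (hφc.mul (hgc.pow 2)) ?_ hIF
    intro t ht
    have h : HasDerivAt (fun t => φ t * g t ^ 2) _ t := (hφd t (Ioo_subset_Icc_self ht)).mul ((hgd t ht).pow 2)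
    have h2 : HasDerivAt (fun t => φ t * g t ^ 2)
        ((-b^2 - (φ t)^2) * g t ^ 2 + φ t * (2 * g t * g' t)) t := by
      convert h using 1; ring
    exact h2.hasDerivWithinAt
  obtain ⟨IA, hIAdef⟩ : ∃ x, x = ∫ t in (0:ℝ)..1, g t ^ 2 := ⟨_, rfl⟩
  obtain ⟨IB, hIBdef⟩ : ∃ x, x = ∫ t in (0:ℝ)..1, g' t ^ 2 := ⟨_, rfl⟩
  obtain ⟨IQ, hIQdef⟩ : ∃ x, x = ∫ t in (0:ℝ)..1, (g' t - φ t * g t) ^ 2 := ⟨_, rfl⟩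
  have e1 : IB - Λ * IA = -(α * (g 1 ^ 2 + g 0 ^ 2)) := by
    have c1 : (∫ t in (0:ℝ)..1, (g' t ^ 2 - Λ * g t ^ 2)) = IB - Λ * IA := by
      rw [intervalIntegral.integral_sub hI2 (hI1.const_mul Λ),
        intervalIntegral.integral_const_mul, hIAdef, hIBdef]
    rw [← c1]
    have c2 : (∫ t in (0:ℝ)..1, (g' t ^ 2 - Λ * g t ^ 2))
        = ∫ t in (0:ℝ)..1, (g' t * g' t + g t * g'' t) := by
      apply intervalIntegral.integral_congr
      intro t ht
      rw [uIcc_of_le (by norm_num)] at ht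
      have h := hode t ht
      have hgg : g'' t = -(Λ * g t) := by linarith
      simp only [hgg]; ring
    rw [c2, hint1]
    have e0 : g' 0 = α * g 0 := by linarith
    have e1' : g' 1 = -(α * g 1) := by linarith
    rw [e0, e1']; ring
  have e2 : IB - b^2 * IA = IQ + (φ 1 * g 1 ^ 2 - φ 0 * g 0 ^ 2) := by
    have c1 : (∫ t in (0:ℝ)..1, (g' t ^ 2 - b^2 * g t ^ 2)) = IB - b^2 * IA := by
      rw [intervalIntegral.integral_sub hI2 (hI1.const_mul (b^2)),
        intervalIntegral.integral_const_mul, hIAdef, hIBdef]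
    rw [← c1]
    have c2 : (∫ t in (0:ℝ)..1, (g' t ^ 2 - b^2 * g t ^ 2))
        = ∫ t in (0:ℝ)..1, ((g' t - φ t * g t) ^ 2
          + ((-b^2 - (φ t)^2) * g t ^ 2 + φ t * (2 * g t * g' t))) := by
      apply intervalIntegral.integral_congr
      intro t _
      ring
    rw [c2, intervalIntegral.integral_add hIQi hIF, hint2, hIQdef]
  have hIQ0 : 0 ≤ IQ := by
    rw [hIQdef]
    exact intervalIntegral.integral_nonneg (by norm_num) (fun t _ => sq_nonneg _)
  have hbdry : φ 1 * g 1 ^ 2 - φ 0 * g 0 ^ 2 ≥ -(α * (g 1 ^ 2 + g 0 ^ 2)) := by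
    have hφ1 : φ 1 = -(b * Real.tan (b / 2)) := by
      rw [hφdef]
      show -b * Real.tan (b * (1 - 1/2)) = _
      rw [show b * ((1:ℝ) - 1/2) = b / 2 by ring]; ring
    have hφ0 : φ 0 = b * Real.tan (b / 2) := by
      rw [hφdef]
      show -b * Real.tan (b * (0 - 1/2)) = _
      rw [show b * ((0:ℝ) - 1/2) = -(b / 2) by ring, Real.tan_neg]; ring
    rw [hφ1, hφ0]
    have k1 := mul_le_mul_of_nonneg_right htanb (sq_nonneg (g 1))
    have k0 := mul_le_mul_of_nonneg_right htanb (sq_nonneg (g 0))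
    nlinarith [k1, k0]
  have hIApos : 0 < IA := by
    rw [hIAdef]
    apply intervalIntegral.integral_pos (by norm_num)
    · exact hgc.pow 2
    · exact fun t _ => sq_nonneg _
    · exact ⟨z₀, hz₀, by positivity⟩
  have hfinal : (Λ - b^2) * IA ≥ 0 := by nlinarith [e1, e2, hIQ0, hbdry]
  nlinarith [hfinal, hIApos]
end
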